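/- The area of Steiner's Hat is invariant over the choice of the boundary point M: the signed area of Δ_u, namely (1/2)∫₀^{2π} (x_u(t)·y_u'(t) − y_u(t)·x_u'(t)) dt, has absolute value equal to π c⁴/(2ab), independently of u. -/

import Mathlib

open Real

noncomputable def steinerHat (a b u t : ℝ) : ℝ × ℝ :=
  (((a ^ 2 - b ^ 2) * (1 + cos (t + u)) * cos t - a ^ 2 * cos u) / a,
   ((a ^ 2 - b ^ 2) * cos t * sin (t + u) - (a ^ 2 - b ^ 2) * sin t - a ^ 2 * sin u) / b)

/-- the (absolute value of the) signed area of Steiner's Hat equals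
`π c⁴ / (2ab)`, independently of `u`. -/
theorem stmt2 (a b u : ℝ) (hb : 0 < b) (hab : b < a) :
    |(1 / 2) * ∫ t in (0:ℝ)..(2 * π),
        ((steinerHat a b u t).1 * deriv (fun s => (steinerHat a b u s).2) t
          - (steinerHat a b u t).2 * deriv (fun s => (steinerHat a b u s).1) t)|
      = π * (a ^ 2 - b ^ 2) ^ 2 / (2 * a * b) := by
  have ha : (0:ℝ) < a := hb.trans hab
  have ha' : a ≠ 0 := ne_of_gt ha
  have hb' : b ≠ 0 := ne_of_gt hb
  set k : ℝ := a ^ 2 - b ^ 2 with hkdef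
  -- derivative of the first coordinate
  have hx : ∀ t : ℝ, HasDerivAt (fun s => (steinerHat a b u s).1)
      ((k * (-sin (t + u)) * cos t + k * (1 + cos (t + u)) * (-sin t)) / a) t := by
    intro t
    have h1 : HasDerivAt (fun s : ℝ => s + u) 1 t := (hasDerivAt_id t).add_const u
    have hc : HasDerivAt (fun s => cos (s + u)) (-sin (t + u)) t := by
      simpa using h1.cos
    have h2 : HasDerivAt (fun s => k * (1 + cos (s + u))) (k * (-sin (t + u))) t :=
      (hc.const_add 1).const_mul k
    have h3 : HasDerivAt (fun s => k * (1 + cos (s + u)) * cos s)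
        (k * (-sin (t + u)) * cos t + k * (1 + cos (t + u)) * (-sin t)) t :=
      h2.mul (Real.hasDerivAt_cos t)
    exact ((h3.sub_const (a ^ 2 * cos u)).div_const a)
  -- derivative of the second coordinate
  have hy : ∀ t : ℝ, HasDerivAt (fun s => (steinerHat a b u s).2)
      ((k * ((-sin t) * sin (t + u) + cos t * cos (t + u)) - k * cos t) / b) t := by
    intro t
    have h1 : HasDerivAt (fun s : ℝ => s + u) 1 t := (hasDerivAt_id t).add_const u
    have hs : HasDerivAt (fun s => sin (s + u)) (cos (t + u)) t := by
      simpa using h1.sin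
    have h3 : HasDerivAt (fun s => k * cos s * sin (s + u))
        (k * (-sin t) * sin (t + u) + k * cos t * cos (t + u)) t :=
      ((Real.hasDerivAt_cos t).const_mul k).mul hs
    have h4 : HasDerivAt (fun s => k * cos s * sin (s + u) - k * sin s)
        (k * (-sin t) * sin (t + u) + k * cos t * cos (t + u) - k * cos t) t :=
      h3.sub ((Real.hasDerivAt_sin t).const_mul k)
    have h5 := (h4.sub_const (a ^ 2 * sin u)).div_const b
    exact h5.congr_deriv (by ring)
  -- the simplified integrand
  set g : ℝ → ℝ := fun t =>
    (k ^ 2 * (-(1 / 2) + cos (2 * t) / 2 + cos (3 * t + u) / 2 - cos (t + u) / 2)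
      + a ^ 2 * k * (-cos (2 * t) + cos (t + u))) / (a * b) with hgdef
  have key : ∀ t : ℝ,
      (steinerHat a b u t).1 * deriv (fun s => (steinerHat a b u s).2) t
        - (steinerHat a b u t).2 * deriv (fun s => (steinerHat a b u s).1) t = g t := by
    intro t
    rw [(hy t).deriv, (hx t).deriv]
    simp only [hgdef, hkdef, steinerHat]
    rw [show (2:ℝ) * t = t + t from by ring, show (3:ℝ) * t + u = t + (t + (t + u)) from by ring]
    simp only [Real.cos_add, Real.sin_add]
    have ht := Real.sin_sq_add_cos_sq t
    have hu := Real.sin_sq_add_cos_sq u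
    linear_combination (((-(1/2:ℝ)) * b ^ 4 + 2 * a ^ 2 * b ^ 2 - (3/2) * a ^ 4
        + (a ^ 4 - a ^ 2 * b ^ 2) * (cos u ^ 2 + sin u ^ 2)
        + cos t * cos u * (-(1/2) * b ^ 4 + a ^ 2 * b ^ 2 - (1/2) * a ^ 4)
        + cos t ^ 2 * (cos u ^ 2 + sin u ^ 2) * (b ^ 4 - 2 * a ^ 2 * b ^ 2 + a ^ 4)
        + sin t * sin u * ((1/2) * b ^ 4 - a ^ 2 * b ^ 2 + (1/2) * a ^ 4)) * ht
      + (a ^ 4 - a ^ 2 * b ^ 2 + cos t ^ 2 * (b ^ 4 - a ^ 4)) * hu) / (a * b)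
  -- antiderivative
  set F : ℝ → ℝ := fun t =>
    (k ^ 2 * (-(t / 2) + sin (2 * t) / 4 + sin (3 * t + u) / 6 - sin (t + u) / 2)
      + a ^ 2 * k * (-(sin (2 * t) / 2) + sin (t + u))) / (a * b) with hFdef
  have hF : ∀ t : ℝ, HasDerivAt F (g t) t := by
    intro t
    have h2t : HasDerivAt (fun s : ℝ => 2 * s) 2 t := by
      simpa using (hasDerivAt_id t).const_mul 2
    have hs2 : HasDerivAt (fun s => sin (2 * s)) (cos (2 * t) * 2) t :=
      (Real.hasDerivAt_sin (2 * t)).comp t h2t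
    have h3t : HasDerivAt (fun s : ℝ => 3 * s + u) 3 t := by
      simpa using ((hasDerivAt_id t).const_mul 3).add_const u
    have hs3 : HasDerivAt (fun s => sin (3 * s + u)) (cos (3 * t + u) * 3) t :=
      h3t.sin
    have h1t : HasDerivAt (fun s : ℝ => s + u) 1 t := (hasDerivAt_id t).add_const u
    have hs1 : HasDerivAt (fun s => sin (s + u)) (cos (t + u) * 1) t :=
      h1t.sin
    have hid : HasDerivAt (fun s : ℝ => s) 1 t := hasDerivAt_id t
    have hA : HasDerivAt
        (fun s => -(s / 2) + sin (2 * s) / 4 + sin (3 * s + u) / 6 - sin (s + u) / 2)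
        (-(1 / 2) + cos (2 * t) * 2 / 4 + cos (3 * t + u) * 3 / 6 - cos (t + u) * 1 / 2) t :=
      (((hid.div_const 2).neg.add (hs2.div_const 4)).add (hs3.div_const 6)).sub
        (hs1.div_const 2)
    have hB : HasDerivAt (fun s => -(sin (2 * s) / 2) + sin (s + u))
        (-(cos (2 * t) * 2 / 2) + cos (t + u) * 1) t :=
      (hs2.div_const 2).neg.add hs1
    have h := ((hA.const_mul (k ^ 2)).add (hB.const_mul (a ^ 2 * k))).div_const (a * b)
    rw [hFdef, hgdef]
    exact h.congr_deriv (by ring)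
  have hgc : Continuous g := by
    rw [hgdef]; fun_prop
  have hint : (∫ t in (0:ℝ)..(2 * π), g t) = -π * k ^ 2 / (a * b) := by
    rw [intervalIntegral.integral_eq_sub_of_hasDerivAt (fun t _ => hF t)
      (hgc.intervalIntegrable 0 (2 * π))]
    simp only [hFdef]
    have s1 : sin (2 * (2 * π)) = 0 := by
      rw [show 2 * (2 * π) = 2 * π + 2 * π from by ring]
      simp [Real.sin_add]
    have s2 : sin (3 * (2 * π) + u) = sin u := by
      rw [show 3 * (2 * π) + u = u + 2 * π + 2 * π + 2 * π from by ring]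
      simp [Real.sin_add_two_pi]
    have s3 : sin (2 * π + u) = sin u := by
      rw [show 2 * π + u = u + 2 * π from by ring, Real.sin_add_two_pi]
    rw [s1, s2, s3]
    norm_num [Real.sin_zero]
    ring
  have hInt : (∫ t in (0:ℝ)..(2 * π),
      ((steinerHat a b u t).1 * deriv (fun s => (steinerHat a b u s).2) t
        - (steinerHat a b u t).2 * deriv (fun s => (steinerHat a b u s).1) t))
      = -π * k ^ 2 / (a * b) := by
    rw [intervalIntegral.integral_congr (g := g) (fun t _ => key t), hint]
  rw [hInt]
  rw [show (1 / 2 : ℝ) * (-π * k ^ 2 / (a * b)) = -(π * k ^ 2 / (2 * a * b)) from by ring,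
    abs_neg, abs_of_nonneg (by positivity)]
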